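/- Turn-to-bearing trajectories are parameterized by arc length: for the piecewise path f(d) defined by f(d) = (r sin(d/r), r(1 − cos(d/r))) for 0 ≤ d ≤ rθ_c and f(d) = (r sin θ_c + (d − rθ_c)cos θ_c, r(1 − cos θ_c) + (d − rθ_c)sin θ_c) for d > rθ_c (with r > 0, 0 < θ_c < 2π), the path is C¹ (continuously differentiable), and ‖f'(d)‖ = 1 for all d > 0, so ∫₀^D ‖f'(α)‖ dα = D. -/

import Mathlib

open Real

lemma glue_deriv {g1 g2 : ℝ → ℝ} {c a : ℝ} (d : ℝ)
    (hg1 : d ≤ c → HasDerivAt g1 a d) (hg2 : c ≤ d → HasDerivAt g2 a d)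
    (heq : g1 c = g2 c) :
    HasDerivAt (fun x => if x ≤ c then g1 x else g2 x) a d := by
  rcases lt_trichotomy d c with h | h | h
  · apply (hg1 h.le).congr_of_eventuallyEq
    filter_upwards [Iio_mem_nhds h] with x hx
    exact if_pos hx.le
  · subst h
    have h1 : HasDerivWithinAt (fun x => if x ≤ d then g1 x else g2 x) a (Set.Iic d) d :=
      (hg1 le_rfl).hasDerivWithinAt.congr (fun x hx => if_pos hx) (if_pos le_rfl)
    have h2 : HasDerivWithinAt (fun x => if x ≤ d then g1 x else g2 x) a (Set.Ici d) d := by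
      apply (hg2 le_rfl).hasDerivWithinAt.congr
      · intro x hx
        rcases eq_or_lt_of_le (Set.mem_Ici.mp hx) with h | h
        · simp [← h, heq]
        · simp [not_le.mpr h]
      · simp [heq]
    have h3 := h1.union h2
    rw [Set.Iic_union_Ici] at h3
    exact h3.hasDerivAt (by simp)
  · apply (hg2 h.le).congr_of_eventuallyEq
    filter_upwards [Ioi_mem_nhds h] with x hx
    exact if_neg (not_le.mpr hx)

theorem ttb_arclength_parameterization (r θc : ℝ) (hr : 0 < r)
    (h1 : 0 < θc) (h2 : θc < 2 * π) :
    ∃ fx' fy' : ℝ → ℝ,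
      (∀ d : ℝ, HasDerivAt
        (fun d => if d ≤ r * θc then r * Real.sin (d / r)
          else r * Real.sin θc + (d - r * θc) * Real.cos θc) (fx' d) d) ∧
      (∀ d : ℝ, HasDerivAt
        (fun d => if d ≤ r * θc then r * (1 - Real.cos (d / r))
          else r * (1 - Real.cos θc) + (d - r * θc) * Real.sin θc) (fy' d) d) ∧
      Continuous fx' ∧ Continuous fy' ∧
      (∀ d : ℝ, 0 < d → Real.sqrt (fx' d ^ 2 + fy' d ^ 2) = 1) ∧
      (∀ D : ℝ, 0 ≤ D → ∫ α in (0:ℝ)..D, Real.sqrt (fx' α ^ 2 + fy' α ^ 2) = D) := by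
  have hr' : r ≠ 0 := hr.ne'
  have hcr : r * θc / r = θc := by field_simp
  have hdiv : ∀ x : ℝ, HasDerivAt (fun y : ℝ => y / r) (1 / r) x := fun x =>
    (hasDerivAt_id x).div_const r
  refine ⟨fun d => Real.cos (min d (r * θc) / r), fun d => Real.sin (min d (r * θc) / r),
    ?_, ?_, ?_, ?_, ?_, ?_⟩
  · intro d
    apply glue_deriv
    · intro h
      have h0 := ((Real.hasDerivAt_sin (d / r)).comp d (hdiv d)).const_mul r
      convert h0 using 1 <;> try rfl
      show Real.cos (min d (r * θc) / r) = _
      rw [min_eq_left h]; field_simp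
    · intro h
      have h0 : HasDerivAt (fun x : ℝ => r * Real.sin θc + (x - r * θc) * Real.cos θc)
          (Real.cos θc) d := by
        have := (((hasDerivAt_id d).sub_const (r * θc)).mul_const (Real.cos θc)).const_add
          (r * Real.sin θc)
        simpa using this
      convert h0 using 1
      simp only [min_eq_right h, hcr]
    · simp [hcr]
  · intro d
    apply glue_deriv
    · intro h
      have h0 : HasDerivAt (fun x : ℝ => r * (1 - Real.cos (x / r))) (Real.sin (d / r)) d := by
        have hc := (Real.hasDerivAt_cos (d / r)).comp d (hdiv d)
        have := ((hasDerivAt_const d (1:ℝ)).sub hc).const_mul r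
        convert this using 1 <;> try rfl
        field_simp
        ring
      convert h0 using 1
      show Real.sin (min d (r * θc) / r) = _
      rw [min_eq_left h]
    · intro h
      have h0 : HasDerivAt (fun x : ℝ => r * (1 - Real.cos θc) + (x - r * θc) * Real.sin θc)
          (Real.sin θc) d := by
        have := (((hasDerivAt_id d).sub_const (r * θc)).mul_const (Real.sin θc)).const_add
          (r * (1 - Real.cos θc))
        simpa using this
      convert h0 using 1
      simp only [min_eq_right h, hcr]
    · simp [hcr]
  · exact Real.continuous_cos.comp ((continuous_id.min continuous_const).div_const r)
  · exact Real.continuous_sin.comp ((continuous_id.min continuous_const).div_const r)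
  · intro d _
    rw [Real.cos_sq_add_sin_sq, Real.sqrt_one]
  · intro D _
    simp [Real.cos_sq_add_sin_sq]
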